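/- Let S be a positive integrable random variable with ℙ(S > u) > 0 for every u ≥ 0, and let R be a bounded random variable (e.g., R = X/S with 0 ≤ X ≤ S). Suppose that for every u ≥ 0 the conditional covariance vanishes: 𝔼[R·S·1{S > u}]·ℙ(S > u) = 𝔼[R·1{S > u}]·𝔼[S·1{S > u}]. Then the conditional expectation of R given σ(S) is almost surely constant and equals 𝔼[R]; in particular, if R = X/S, then 𝔼[X/S | σ(S)] = 𝔼[X]/𝔼[S] almost surely (using that r_{0,i} = r̃_{0,i}). -/

import Mathlib

open MeasureTheory Set
open scoped ENNReal NNReal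

lemma layer_aux {Ω : Type*} [MeasurableSpace Ω] (μ : Measure Ω) [IsFiniteMeasure μ]
    (S : Ω → ℝ) (hSmeas : Measurable S) (hSint : Integrable S μ)
    (R : Ω → ℝ) (hRmeas : Measurable R) (C : ℝ) (hRbd : ∀ ω, |R ω| ≤ C) (u : ℝ) :
    (∫ ω in {ω | u < S ω}, R ω * (S ω - u) ∂μ
      = ∫ t in Ioi u, ∫ ω in {ω | t < S ω}, R ω ∂μ) ∧
    IntegrableOn (fun t => ∫ ω in {ω | t < S ω}, R ω ∂μ) (Ioi u) volume := by
  set ν : Measure ℝ := volume.restrict (Ioi u) with hν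
  set f : ℝ → Ω → ℝ := fun t ω => if t < S ω then R ω else 0 with hf
  set A : Set (ℝ × Ω) := {p : ℝ × Ω | p.1 < S p.2} with hAdef
  have hA : MeasurableSet A :=
    measurableSet_lt measurable_fst (hSmeas.comp measurable_snd)
  have hFmeas : Measurable (Function.uncurry f) := by
    have : Function.uncurry f = fun p : ℝ × Ω => if p.1 < S p.2 then R p.2 else 0 := rfl
    rw [this]
    exact Measurable.ite hA (hRmeas.comp measurable_snd) measurable_const
  have hAfin : (ν.prod μ) A < ⊤ := by
    rw [Measure.prod_apply_symm hA]
    have hslice : ∀ ω : Ω, ν ((fun t => (t, ω)) ⁻¹' A) = ENNReal.ofReal (S ω - u) := by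
      intro ω
      have : ((fun t => (t, ω)) ⁻¹' A) = Iio (S ω) := rfl
      rw [this, hν, Measure.restrict_apply measurableSet_Iio, Set.Iio_inter_Ioi,
        Real.volume_Ioo]
    calc ∫⁻ ω, ν ((fun t => (t, ω)) ⁻¹' A) ∂μ
        = ∫⁻ ω, ENNReal.ofReal (S ω - u) ∂μ := by simp_rw [hslice]
      _ ≤ ∫⁻ ω, ((‖S ω‖₊ : ℝ≥0∞) + ENNReal.ofReal (abs u)) ∂μ := by
          apply lintegral_mono
          intro ω
          calc ENNReal.ofReal (S ω - u) ≤ ENNReal.ofReal ((abs (S ω)) + (abs u)) := by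
                apply ENNReal.ofReal_le_ofReal
                have := le_abs_self (S ω); have := neg_abs_le u; linarith
            _ ≤ (‖S ω‖₊ : ℝ≥0∞) + ENNReal.ofReal (abs u) := by
                refine (ENNReal.ofReal_add_le).trans ?_
                gcongr
                exact le_of_eq (Real.enorm_eq_ofReal_abs (S ω)).symm
      _ < ⊤ := by
          rw [lintegral_add_right _ measurable_const]
          refine ENNReal.add_lt_top.mpr ⟨hSint.2, ?_⟩
          rw [lintegral_const]
          exact ENNReal.mul_lt_top (by simp) (measure_lt_top μ univ)
  have hFint : Integrable (Function.uncurry f) (ν.prod μ) := by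
    refine ⟨hFmeas.aestronglyMeasurable, ?_⟩
    have hbd : ∀ p : ℝ × Ω, (‖Function.uncurry f p‖₊ : ℝ≥0∞)
        ≤ Set.indicator A (fun _ => ENNReal.ofReal (abs C)) p := by
      intro p
      by_cases h : p ∈ A
      · rw [Set.indicator_of_mem h]
        have h2 : Function.uncurry f p = R p.2 := if_pos h
        rw [h2, ← enorm_eq_nnnorm, Real.enorm_eq_ofReal_abs]
        exact ENNReal.ofReal_le_ofReal ((hRbd p.2).trans (le_abs_self C))
      · have h2 : Function.uncurry f p = 0 := if_neg h
        rw [h2, Set.indicator_of_notMem h]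
        simp
    calc ∫⁻ p, (‖Function.uncurry f p‖₊ : ℝ≥0∞) ∂(ν.prod μ)
        ≤ ∫⁻ p, Set.indicator A (fun _ => ENNReal.ofReal (abs C)) p ∂(ν.prod μ) :=
          lintegral_mono hbd
      _ = ENNReal.ofReal (abs C) * (ν.prod μ) A := by
          rw [lintegral_indicator_const hA]
      _ < ⊤ := ENNReal.mul_lt_top (by simp) hAfin
  have hinner1 : ∀ t, ∫ ω, f t ω ∂μ = ∫ ω in {ω | t < S ω}, R ω ∂μ := by
    intro t
    rw [← integral_indicator (measurableSet_lt measurable_const hSmeas)]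
    congr 1 with ω
  constructor
  · have hswap := MeasureTheory.integral_integral_swap (f := f) hFint
    have hinner2 : ∀ ω, ∫ t, f t ω ∂ν = R ω * (max (S ω - u) 0) := by
      intro ω
      have h3 : (fun t => f t ω) = Set.indicator (Iio (S ω)) (fun _ => R ω) := by
        ext t; simp [hf, Set.indicator_apply]
      rw [h3, hν, setIntegral_indicator measurableSet_Iio, Set.Ioi_inter_Iio,
        setIntegral_const, Real.volume_real_Ioo, smul_eq_mul, mul_comm]
    calc ∫ ω in {ω | u < S ω}, R ω * (S ω - u) ∂μ
        = ∫ ω, R ω * (max (S ω - u) 0) ∂μ := by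
          rw [← integral_indicator (measurableSet_lt measurable_const hSmeas)]
          congr 1 with ω
          rcases le_or_gt (S ω) u with h | h
          · rw [Set.indicator_of_notMem (by simpa using not_lt.mpr h),
              max_eq_right (by linarith), mul_zero]
          · rw [Set.indicator_of_mem (by simpa using h), max_eq_left (by linarith)]
      _ = ∫ ω, ∫ t, f t ω ∂ν ∂μ := by simp_rw [hinner2]
      _ = ∫ t, ∫ ω, f t ω ∂μ ∂ν := hswap.symm
      _ = ∫ t in Ioi u, ∫ ω in {ω | t < S ω}, R ω ∂μ := by
          rw [hν]; exact setIntegral_congr_fun measurableSet_Ioi (fun t _ => hinner1 t)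
  · have h4 := hFint.integral_prod_left
    apply h4.congr
    filter_upwards with t
    exact hinner1 t


lemma gronwall_aux (f p : ℝ → ℝ) (hp0 : ∀ t, 0 ≤ p t) (hp1 : ∀ t, p t ≤ 1)
    (hfint : IntegrableOn f (Ioi 0) volume) (hpint : IntegrableOn p (Ioi 0) volume)
    (hPpos : ∀ t, 0 ≤ t → 0 < ∫ s in Ioi t, p s)
    (hc : ∀ t, 0 ≤ t → p t * ∫ s in Ioi t, f s = f t * ∫ s in Ioi t, p s) :
    ∀ u, 0 ≤ u → f u * (∫ s in Ioi 0, p s) = (∫ s in Ioi 0, f s) * p u := by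
  set F : ℝ → ℝ := fun v => ∫ s in Ioi v, f s with hF
  set P : ℝ → ℝ := fun v => ∫ s in Ioi v, p s with hPdef
  have hsub : ∀ a b : ℝ, 0 ≤ a → a ≤ b → Ioc a b ⊆ Ioi 0 := by
    intro a b ha hab x hx; exact lt_of_le_of_lt ha hx.1
  have hsub2 : ∀ a : ℝ, 0 ≤ a → Ioi a ⊆ Ioi 0 := by
    intro a ha x hx; exact lt_of_le_of_lt ha hx
  have hdisj : ∀ b : ℝ, Disjoint (Ioc (0:ℝ) b) (Ioi b) := by
    intro b
    rw [Set.disjoint_left]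
    intro x hx hx2
    exact absurd hx.2 (not_le.mpr hx2)
  have split : ∀ (g : ℝ → ℝ), IntegrableOn g (Ioi 0) volume → ∀ b, 0 ≤ b →
      ∫ s in Ioi 0, g s = (∫ s in Ioc 0 b, g s) + ∫ s in Ioi b, g s := by
    intro g hg b hb
    rw [← setIntegral_union (hdisj b) measurableSet_Ioi
      (hg.mono_set (hsub 0 b le_rfl hb)) (hg.mono_set (hsub2 b hb)),
      Set.Ioc_union_Ioi_eq_Ioi hb]
  have splitm : ∀ (g : ℝ → ℝ), IntegrableOn g (Ioi 0) volume → (∀ t, 0 ≤ g t) →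
      ∀ a b, 0 ≤ a → a ≤ b → ∫ s in Ioi b, g s ≤ ∫ s in Ioi a, g s := by
    intro g hg hgpos a b ha hab
    have : ∫ s in Ioi a, g s = (∫ s in Ioc a b, g s) + ∫ s in Ioi b, g s := by
      rw [← setIntegral_union (by
          rw [Set.disjoint_left]; intro x hx hx2; exact absurd hx.2 (not_le.mpr hx2))
        measurableSet_Ioi
        (hg.mono_set (hsub a b ha hab)) (hg.mono_set (hsub2 b (ha.trans hab))),
        Set.Ioc_union_Ioi_eq_Ioi hab]
    rw [this]
    have : 0 ≤ ∫ s in Ioc a b, g s := setIntegral_nonneg measurableSet_Ioc fun x _ => hgpos x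
    linarith
  set H : ℝ → ℝ := fun v => F v * P 0 - P v * F 0 with hHdef
  -- integral representation of H on [0, ∞)
  have hHrep : ∀ v, 0 ≤ v → H v = ∫ t in Ioc 0 v, (F 0 * p t - P 0 * f t) := by
    intro v hv
    have h1 : F v = F 0 - ∫ t in Ioc 0 v, f t := by
      rw [hF]; simp only []
      rw [split f hfint v hv]; ring
    have h2 : P v = P 0 - ∫ t in Ioc 0 v, p t := by
      rw [hPdef]; simp only []
      rw [split p hpint v hv]; ring
    rw [hHdef]; simp only []
    rw [h1, h2, integral_sub ((hpint.mono_set (hsub 0 v le_rfl hv)).const_mul (F 0))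
      ((hfint.mono_set (hsub 0 v le_rfl hv)).const_mul (P 0)),
      MeasureTheory.integral_const_mul, MeasureTheory.integral_const_mul]
    ring
  have hPnonneg : ∀ t, 0 ≤ P t := fun t => setIntegral_nonneg measurableSet_Ioi fun x _ => hp0 x
  have hPmono : ∀ a b, 0 ≤ a → a ≤ b → P b ≤ P a := fun a b ha hab => splitm p hpint hp0 a b ha hab
  have habsint : IntegrableOn (fun s => |f s|) (Ioi 0) volume := hfint.abs
  have habsF : ∀ t, 0 ≤ t → |F t| ≤ ∫ s in Ioi 0, |f s| := by
    intro t ht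
    calc |F t| ≤ ∫ s in Ioi t, |f s| := by
          rw [hF]
          simpa [Real.norm_eq_abs] using
            norm_integral_le_integral_norm (μ := volume.restrict (Ioi t)) f
      _ ≤ ∫ s in Ioi 0, |f s| := by
          apply setIntegral_mono_set habsint
          · filter_upwards with x using abs_nonneg (f x)
          · exact HasSubset.Subset.eventuallyLE (hsub2 t ht)
  set B : ℝ := (∫ s in Ioi 0, |f s|) * P 0 + P 0 * |F 0| with hB
  have hHbd : ∀ t, 0 ≤ t → |H t| ≤ B := by
    intro t ht
    have h1 : |H t| ≤ |F t| * |P 0| + |P t| * |F 0| := by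
      rw [hHdef]
      refine (abs_sub _ _).trans ?_
      rw [abs_mul, abs_mul]
    have h2 : |P 0| = P 0 := abs_of_nonneg (hPnonneg 0)
    have h3 : |P t| = P t := abs_of_nonneg (hPnonneg t)
    have h4 := habsF t ht
    have h5 := hPmono 0 t le_rfl ht
    rw [h2, h3] at h1
    have h6 : 0 ≤ |F 0| := abs_nonneg _
    nlinarith [hPnonneg 0]
  -- continuity of H on Icc 0 u
  have hHcont : ∀ u, 0 ≤ u → ContinuousOn H (Icc 0 u) := by
    intro u hu
    have hfc : ContinuousOn (fun v => ∫ t in Ioc 0 v, f t) (Icc 0 u) :=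
      intervalIntegral.continuousOn_primitive
        ((integrableOn_Icc_iff_integrableOn_Ioc).mpr (hfint.mono_set (hsub 0 u le_rfl hu)))
    have hpc : ContinuousOn (fun v => ∫ t in Ioc 0 v, p t) (Icc 0 u) :=
      intervalIntegral.continuousOn_primitive
        ((integrableOn_Icc_iff_integrableOn_Ioc).mpr (hpint.mono_set (hsub 0 u le_rfl hu)))
    have : ContinuousOn (fun v =>
        (F 0 - ∫ t in Ioc 0 v, f t) * P 0 - (P 0 - ∫ t in Ioc 0 v, p t) * F 0) (Icc 0 u) :=
      (((continuousOn_const.sub hfc).mul continuousOn_const).sub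
        ((continuousOn_const.sub hpc).mul continuousOn_const))
    apply this.congr
    intro v hv
    have h1 : F v = F 0 - ∫ t in Ioc 0 v, f t := by
      rw [hF]; simp only []
      rw [split f hfint v hv.1]; ring
    have h2 : P v = P 0 - ∫ t in Ioc 0 v, p t := by
      rw [hPdef]; simp only []
      rw [split p hpint v hv.1]; ring
    rw [hHdef]; simp only []
    rw [h1, h2]
  -- main argument for a fixed u
  intro u hu
  have hPu : 0 < P u := hPpos u hu
  set K : ℝ := 1 / P u with hK
  have hK0 : 0 ≤ K := le_of_lt (by positivity)
  have hHIcc : IntegrableOn H (Icc 0 u) volume := (hHcont u hu).integrableOn_Icc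
  have hHabsint : ∀ v, v ∈ Icc (0:ℝ) u → IntegrableOn (fun t => |H t|) (Ioc 0 v) volume := by
    intro v hv
    exact IntegrableOn.mono_set hHIcc.abs (fun x hx => ⟨le_of_lt hx.1, hx.2.trans hv.2⟩)
  have hKiq : ∀ v ∈ Icc (0:ℝ) u, |H v| ≤ K * ∫ t in Ioc 0 v, |H t| := by
    intro v hv
    have hrep := hHrep v hv.1
    have hgint : IntegrableOn (fun t => F 0 * p t - P 0 * f t) (Ioc 0 v) volume :=
      ((hpint.mono_set (hsub 0 v le_rfl hv.1)).const_mul (F 0)).sub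
        ((hfint.mono_set (hsub 0 v le_rfl hv.1)).const_mul (P 0))
    calc |H v| = |∫ t in Ioc 0 v, (F 0 * p t - P 0 * f t)| := by rw [hrep]
      _ ≤ ∫ t in Ioc 0 v, |F 0 * p t - P 0 * f t| := by
          simpa [Real.norm_eq_abs] using
            norm_integral_le_integral_norm (μ := volume.restrict (Ioc 0 v))
              (fun t => F 0 * p t - P 0 * f t)
      _ ≤ ∫ t in Ioc 0 v, K * |H t| := by
          apply setIntegral_mono_on hgint.abs
            (((hHabsint v hv).const_mul K)) measurableSet_Ioc
          intro t ht
          have ht0 : (0:ℝ) ≤ t := le_of_lt ht.1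
          have hPt : 0 < P t := hPpos t ht0
          have hct := hc t ht0
          have heq : F 0 * p t - P 0 * f t = -(p t / P t) * H t := by
            rw [hHdef]; simp only []
            field_simp
            linear_combination (P 0) * hct
          rw [heq, abs_mul, abs_neg, abs_div, abs_of_nonneg (hp0 t),
            abs_of_nonneg (le_of_lt hPt)]
          have hdiv : p t / P t ≤ K := by
            rw [hK]
            exact div_le_div₀ zero_le_one (hp1 t) hPu (hPmono t u ht0 (ht.2.trans hv.2))
          exact mul_le_mul_of_nonneg_right hdiv (abs_nonneg _)
      _ = K * ∫ t in Ioc 0 v, |H t| := by rw [MeasureTheory.integral_const_mul]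
  have key : ∀ n : ℕ, ∀ v ∈ Icc (0:ℝ) u, |H v| ≤ B * (K ^ n * v ^ n / n.factorial) := by
    intro n
    induction n with
    | zero => intro v hv; simpa using hHbd v hv.1
    | succ n ih =>
      intro v hv
      have hpowint : IntegrableOn (fun t : ℝ => B * K ^ n / n.factorial * t ^ n)
          (Ioc 0 v) volume := (continuous_const.mul (continuous_pow n)).integrableOn_Ioc
      have hpow : ∫ t in Ioc 0 v, t ^ n = v ^ (n + 1) / (n + 1) := by
        rw [← intervalIntegral.integral_of_le hv.1, integral_pow]
        simp
      calc |H v| ≤ K * ∫ t in Ioc 0 v, |H t| := hKiq v hv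
        _ ≤ K * ∫ t in Ioc 0 v, B * K ^ n / n.factorial * t ^ n := by
            apply mul_le_mul_of_nonneg_left _ hK0
            apply setIntegral_mono_on (hHabsint v hv) hpowint measurableSet_Ioc
            intro t ht
            have := ih t ⟨le_of_lt ht.1, ht.2.trans hv.2⟩
            calc |H t| ≤ B * (K ^ n * t ^ n / n.factorial) := this
              _ = B * K ^ n / n.factorial * t ^ n := by ring
        _ = B * (K ^ (n+1) * v ^ (n+1) / (n+1).factorial) := by
            rw [MeasureTheory.integral_const_mul, hpow]
            have h1 : ((n:ℝ) + 1) ≠ 0 := by positivity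
            have h2 : ((n.factorial : ℝ)) ≠ 0 := Nat.cast_ne_zero.mpr n.factorial_ne_zero
            rw [Nat.factorial_succ]
            push_cast
            field_simp
            ring
  have hHu : H u = 0 := by
    have h0 : Filter.Tendsto (fun n : ℕ => B * ((K * u) ^ n / n.factorial))
        Filter.atTop (nhds 0) := by
      have := (FloorSemiring.tendsto_pow_div_factorial_atTop (K * u)).const_mul B
      simpa using this
    have hle : ∀ n : ℕ, |H u| ≤ B * ((K * u) ^ n / n.factorial) := by
      intro n
      have := key n u ⟨hu, le_rfl⟩
      calc |H u| ≤ B * (K ^ n * u ^ n / n.factorial) := this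
        _ = B * ((K * u) ^ n / n.factorial) := by rw [mul_pow]
    have habs : |H u| ≤ 0 := ge_of_tendsto h0 (Filter.Eventually.of_forall hle)
    exact abs_eq_zero.mp (le_antisymm habs (abs_nonneg _))
  have hFP : F u * P 0 = P u * F 0 := by
    have := hHu
    rw [hHdef] at this; simp only [] at this
    linarith
  have hcu := hc u hu
  have hmain : f u * P 0 * P u = (F 0 * p u) * P u := by
    calc f u * P 0 * P u = (f u * P u) * P 0 := by ring
      _ = (p u * F u) * P 0 := by rw [← hcu]
      _ = p u * (F u * P 0) := by ring
      _ = p u * (P u * F 0) := by rw [hFP]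
      _ = (F 0 * p u) * P u := by ring
  exact mul_right_cancel₀ (ne_of_gt hPu) hmain

/-- If the conditional covariance of a bounded `R` and a positive integrable `S` given each
tail event `{S > u}`, `u ≥ 0`, vanishes, then `𝔼[R | σ(S)] = 𝔼[R]` a.s.; in particular, if
`R = X/S` with `0 ≤ X ≤ S` integrable, then `𝔼[X/S | σ(S)] = 𝔼[X]/𝔼[S]` a.s. -/
theorem condexp_const_of_tail_cov_zero
    {Ω : Type*} [MeasurableSpace Ω] (μ : Measure Ω) [IsProbabilityMeasure μ]
    (S : Ω → ℝ) (hSmeas : Measurable S) (hSpos : ∀ ω, 0 < S ω) (hSint : Integrable S μ)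
    (hP : ∀ u : ℝ, 0 ≤ u → 0 < μ {ω | u < S ω})
    (R : Ω → ℝ) (hRmeas : Measurable R) (C : ℝ) (hRbd : ∀ ω, |R ω| ≤ C)
    (hcov : ∀ u : ℝ, 0 ≤ u →
      (∫ ω in {ω | u < S ω}, R ω * S ω ∂μ) * (μ {ω | u < S ω}).toReal =
        (∫ ω in {ω | u < S ω}, R ω ∂μ) * (∫ ω in {ω | u < S ω}, S ω ∂μ)) :
    (μ[R | MeasurableSpace.comap S (borel ℝ)] =ᵐ[μ] fun _ => ∫ ω, R ω ∂μ) ∧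
      (∀ X : Ω → ℝ, Integrable X μ → (∀ ω, 0 ≤ X ω ∧ X ω ≤ S ω) →
        R = (fun ω => X ω / S ω) →
        μ[R | MeasurableSpace.comap S (borel ℝ)] =ᵐ[μ]
          fun _ => (∫ ω, X ω ∂μ) / (∫ ω, S ω ∂μ)) := by
  have hm : MeasurableSpace.comap S (borel ℝ) ≤ ‹MeasurableSpace Ω› := by
    have : borel ℝ = (inferInstance : MeasurableSpace ℝ) := (BorelSpace.measurable_eq).symm
    rw [this]
    exact hSmeas.comap_le
  have hmeasSet : ∀ t : ℝ, MeasurableSet {ω | t < S ω} :=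
    fun t => measurableSet_lt measurable_const hSmeas
  have hRint : Integrable R μ :=
    ⟨hRmeas.aestronglyMeasurable, HasFiniteIntegral.of_bounded (C := C)
      (Filter.Eventually.of_forall fun ω => by simpa [Real.norm_eq_abs] using hRbd ω)⟩
  have hRSint : Integrable (fun ω => R ω * S ω) μ :=
    hSint.bdd_mul hRmeas.aestronglyMeasurable (c := C) (Filter.Eventually.of_forall fun ω => by
      simpa [Real.norm_eq_abs] using hRbd ω)
  set p : ℝ → ℝ := fun t => (μ {ω | t < S ω}).toReal with hp
  set f : ℝ → ℝ := fun t => ∫ ω in {ω | t < S ω}, R ω ∂μ with hfdef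
  set c : ℝ := ∫ ω, R ω ∂μ with hc
  -- basic facts
  have huniv : ∀ t : ℝ, t ≤ 0 → {ω | t < S ω} = univ := by
    intro t ht
    ext ω; simp only [mem_setOf_eq, mem_univ, iff_true]
    exact lt_of_le_of_lt ht (hSpos ω)
  have hp0 : ∀ t, 0 ≤ p t := fun t => ENNReal.toReal_nonneg
  have hp1 : ∀ t, p t ≤ 1 := by
    intro t
    rw [hp]
    have h1 : μ {ω | t < S ω} ≤ 1 := le_of_le_of_eq (measure_mono (subset_univ _)) measure_univ
    calc (μ {ω | t < S ω}).toReal ≤ (1 : ℝ≥0∞).toReal :=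
          ENNReal.toReal_mono (by simp) h1
      _ = 1 := by simp
  have hppos : ∀ t : ℝ, 0 ≤ t → 0 < p t := by
    intro t ht
    exact ENNReal.toReal_pos (ne_of_gt (hP t ht)) (measure_ne_top μ _)
  -- layer cake consequences
  have hlayR := fun u : ℝ => layer_aux μ S hSmeas hSint R hRmeas C hRbd u
  have hlay1 := fun u : ℝ => layer_aux μ S hSmeas hSint (fun _ => (1:ℝ)) measurable_const 1
    (by intro ω; simp) u
  have hp_eq : ∀ t : ℝ, (∫ ω in {ω | t < S ω}, (1:ℝ) ∂μ) = p t := by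
    intro t; rw [setIntegral_const]; simp [hp, measureReal_def]
  have hfint : IntegrableOn f (Ioi 0) volume := (hlayR 0).2
  have hpint : IntegrableOn p (Ioi 0) volume := by
    refine ((hlay1 0).2).congr ?_
    exact Filter.Eventually.of_forall fun t => hp_eq t
  -- F and P notation
  have hFrep : ∀ u : ℝ, 0 ≤ u →
      (∫ ω in {ω | u < S ω}, R ω * S ω ∂μ) = u * f u + ∫ t in Ioi u, f t := by
    intro u hu
    have h1 := (hlayR u).1
    have h2 : ∫ ω in {ω | u < S ω}, R ω * (S ω - u) ∂μ
        = (∫ ω in {ω | u < S ω}, R ω * S ω ∂μ) - u * f u := by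
      rw [hfdef]
      rw [show (fun ω => R ω * (S ω - u)) = fun ω => R ω * S ω - u * R ω by ext ω; ring]
      rw [integral_sub (hRSint.restrict) ((hRint.restrict).const_mul u),
        MeasureTheory.integral_const_mul]
    rw [h2] at h1
    linarith [h1]
  have hPrep : ∀ u : ℝ, 0 ≤ u →
      (∫ ω in {ω | u < S ω}, S ω ∂μ) = u * p u + ∫ t in Ioi u, p t := by
    intro u hu
    have h1 := (hlay1 u).1
    have h2 : ∫ ω in {ω | u < S ω}, (1:ℝ) * (S ω - u) ∂μ
        = (∫ ω in {ω | u < S ω}, S ω ∂μ) - u * p u := by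
      rw [show (fun ω => (1:ℝ) * (S ω - u)) = fun ω => S ω - u * 1 by ext ω; ring]
      rw [integral_sub (hSint.restrict) ((integrable_const (1:ℝ)).restrict.const_mul u),
        MeasureTheory.integral_const_mul, hp_eq u]
    rw [h2] at h1
    have h3 : ∫ t in Ioi u, (∫ ω in {ω | t < S ω}, (1:ℝ) ∂μ) = ∫ t in Ioi u, p t := by
      exact setIntegral_congr_fun measurableSet_Ioi fun t _ => hp_eq t
    rw [h3] at h1
    linarith [h1]
  -- convert covariance hypothesis
  have hcc : ∀ t : ℝ, 0 ≤ t →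
      p t * (∫ s in Ioi t, f s) = f t * (∫ s in Ioi t, p s) := by
    intro t ht
    have h := hcov t ht
    rw [hFrep t ht, hPrep t ht] at h
    have hpt : (μ {ω | t < S ω}).toReal = p t := rfl
    rw [hpt] at h
    have hft : (∫ ω in {ω | t < S ω}, R ω ∂μ) = f t := rfl
    rw [hft] at h
    linear_combination h
  have hPpos : ∀ t : ℝ, 0 ≤ t → 0 < ∫ s in Ioi t, p s := by
    intro t ht
    have hint : IntegrableOn p (Ioi t) volume :=
      hpint.mono_set (fun x hx => lt_of_le_of_lt ht hx)
    rw [setIntegral_pos_iff_support_of_nonneg_ae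
      (Filter.Eventually.of_forall fun x => hp0 x) hint]
    have hsup : Ioi t ⊆ Function.support p ∩ Ioi t := by
      intro x hx
      exact ⟨ne_of_gt (hppos x (ht.trans (le_of_lt hx))), hx⟩
    calc (0:ℝ≥0∞) < volume (Ioi t) := by simp [Real.volume_Ioi]
      _ ≤ volume (Function.support p ∩ Ioi t) := measure_mono hsup
  -- Gronwall
  have hgron := gronwall_aux f p hp0 hp1 hfint hpint hPpos hcc
  have hf0 : f 0 = c := by
    rw [hfdef, hc]; simp only []
    rw [huniv 0 le_rfl, Measure.restrict_univ]
  have hp0' : p 0 = 1 := by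
    rw [hp]; simp only []
    rw [huniv 0 le_rfl, measure_univ]; simp
  have hP0 : 0 < ∫ s in Ioi (0:ℝ), p s := hPpos 0 le_rfl
  have hF0 : (∫ s in Ioi (0:ℝ), f s) = c * ∫ s in Ioi (0:ℝ), p s := by
    have := hgron 0 le_rfl
    rw [hf0, hp0'] at this
    linarith
  have hkey : ∀ t : ℝ, f t = c * p t := by
    intro t
    rcases le_or_gt 0 t with ht | ht
    · have := hgron t ht
      rw [hF0] at this
      have h2 : f t * (∫ s in Ioi (0:ℝ), p s) = (c * p t) * (∫ s in Ioi (0:ℝ), p s) := by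
        rw [this]; ring
      exact mul_right_cancel₀ (ne_of_gt hP0) h2
    · rw [hfdef, hp]; simp only []
      rw [huniv t (le_of_lt ht), Measure.restrict_univ, measure_univ, ← hc]
      simp
  -- characterize conditional expectation
  have hsetint : ∀ B : Set ℝ, MeasurableSet[borel ℝ] B →
      ∫ ω in S ⁻¹' B, R ω ∂μ = c * (μ (S ⁻¹' B)).toReal := by
    have hpi : IsPiSystem (range (Ioi : ℝ → Set ℝ)) := isPiSystem_Ioi
    have hempty : (fun B : Set ℝ => ∫ ω in S ⁻¹' B, R ω ∂μ = c * (μ (S ⁻¹' B)).toReal) ∅ := by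
      simp
    refine MeasurableSpace.induction_on_inter (m := borel ℝ)
      (C := fun B _ => ∫ ω in S ⁻¹' B, R ω ∂μ = c * (μ (S ⁻¹' B)).toReal)
      (s := range (Ioi : ℝ → Set ℝ)) (borel_eq_generateFrom_Ioi ℝ) hpi hempty ?_ ?_ ?_
    · rintro t ⟨a, rfl⟩
      have : S ⁻¹' Ioi a = {ω | a < S ω} := rfl
      rw [this]
      exact hkey a
    · intro B hBmeas hBeq
      have hBm : MeasurableSet (S ⁻¹' B) := hm _ ⟨B, hBmeas, rfl⟩
      have h1 : S ⁻¹' Bᶜ = (S ⁻¹' B)ᶜ := rfl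
      rw [h1]
      have h2 : ∫ ω in (S ⁻¹' B)ᶜ, R ω ∂μ = c - ∫ ω in S ⁻¹' B, R ω ∂μ := by
        have := integral_add_compl hBm hRint
        rw [← hc] at this
        linarith
      rw [h2, hBeq, measure_compl hBm (measure_ne_top μ _), measure_univ,
        ENNReal.toReal_sub_of_le (le_of_le_of_eq (measure_mono (subset_univ _)) measure_univ)
          (by simp)]
      simp; ring
    · intro g hdisj hgmeas hgeq
      have hgm : ∀ i, MeasurableSet (S ⁻¹' g i) := fun i => hm _ ⟨g i, hgmeas i, rfl⟩
      have hdisj2 : Pairwise (Function.onFun Disjoint fun i => S ⁻¹' g i) := by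
        intro i j hij
        exact Disjoint.preimage S (hdisj hij)
      have h1 : S ⁻¹' (⋃ i, g i) = ⋃ i, S ⁻¹' g i := by simp [Set.preimage_iUnion]
      rw [h1, integral_iUnion hgm hdisj2 hRint.integrableOn, measure_iUnion hdisj2 hgm,
        ENNReal.tsum_toReal_eq (fun i => measure_ne_top μ _), ← tsum_mul_left]
      exact tsum_congr fun i => hgeq i
  have main : μ[R | MeasurableSpace.comap S (borel ℝ)] =ᵐ[μ] fun _ => c := by
    have hconst : AEStronglyMeasurable[MeasurableSpace.comap S (borel ℝ)]
        (fun _ : Ω => c) μ :=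
      ⟨fun _ => c, @stronglyMeasurable_const _ _ (MeasurableSpace.comap S (borel ℝ)) _ c,
        Filter.EventuallyEq.rfl⟩
    refine (ae_eq_condExp_of_forall_setIntegral_eq hm hRint ?_ ?_ hconst).symm
    · intro s _ _
      exact (integrable_const c).integrableOn
    · intro s hs _
      obtain ⟨B, hB, rfl⟩ := hs
      rw [hsetint B hB, setIntegral_const, smul_eq_mul, mul_comm, measureReal_def]
  refine ⟨main, ?_⟩
  intro X hXint hX hRX
  have hRS : (fun ω => R ω * S ω) = X := by
    ext ω
    rw [hRX]
    exact div_mul_cancel₀ (X ω) (ne_of_gt (hSpos ω))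
  have hS0 : 0 < ∫ ω, S ω ∂μ := by
    rw [integral_pos_iff_support_of_nonneg (fun ω => le_of_lt (hSpos ω)) hSint]
    have : Function.support S = univ := by
      ext ω; simp [Function.mem_support, ne_of_gt (hSpos ω)]
    rw [this, measure_univ]
    simp
  have h0 := hcov 0 le_rfl
  rw [huniv 0 le_rfl, Measure.restrict_univ, measure_univ] at h0
  rw [hRS] at h0
  simp only [ENNReal.toReal_one, mul_one] at h0
  have hval : c = (∫ ω, X ω ∂μ) / (∫ ω, S ω ∂μ) := by
    rw [hc, eq_div_iff (ne_of_gt hS0)]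
    linarith [h0]
  have : (fun _ : Ω => c) = fun _ : Ω => (∫ ω, X ω ∂μ) / (∫ ω, S ω ∂μ) := by
    ext _; rw [hval]
  rw [← this]
  exact main
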